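/- Let L = diag(l₁, l₂) and D = diag(d₁, d₂) and K = diag(k₁, k₂) be 2×2 real diagonal matrices with l₁, l₂, d₁, d₂, k₁, k₂ > 0, and let H be a 2×2 real symmetric positive definite matrix. Set P = D·H·K. Then every complex number z satisfying det(z²·I₂ + z·L + P) = 0 has strictly negative real part. -/

import Mathlib

theorem quadratic_matrix_pencil_roots_neg_re
    (l₁ l₂ d₁ d₂ k₁ k₂ : ℝ)
    (hl₁ : 0 < l₁) (hl₂ : 0 < l₂) (hd₁ : 0 < d₁) (hd₂ : 0 < d₂)
    (hk₁ : 0 < k₁) (hk₂ : 0 < k₂)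
    (H : Matrix (Fin 2) (Fin 2) ℝ) (hH : H.PosDef)
    (L : Matrix (Fin 2) (Fin 2) ℝ) (hL : L = Matrix.diagonal ![l₁, l₂])
    (D : Matrix (Fin 2) (Fin 2) ℝ) (hD : D = Matrix.diagonal ![d₁, d₂])
    (K : Matrix (Fin 2) (Fin 2) ℝ) (hK : K = Matrix.diagonal ![k₁, k₂])
    (P : Matrix (Fin 2) (Fin 2) ℝ) (hP : P = D * H * K)
    (z : ℂ)
    (hz : (z ^ 2 • (1 : Matrix (Fin 2) (Fin 2) ℂ)
        + z • L.map (algebraMap ℝ ℂ) + P.map (algebraMap ℝ ℂ)).det = 0) :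
    z.re < 0 := by
  subst hL hD hK hP
  obtain ⟨v, hv, hmv⟩ := (Matrix.exists_mulVec_eq_zero_iff).2 hz
  have h0 := congrFun hmv 0
  have h1 := congrFun hmv 1
  simp only [Matrix.mulVec, dotProduct, Fin.sum_univ_two, Matrix.add_apply,
    Matrix.smul_apply, Matrix.map_apply, Matrix.one_apply, Matrix.diagonal_mul,
    Matrix.mul_diagonal, Matrix.diagonal_apply, Matrix.cons_val_zero, Matrix.cons_val_one,
    Matrix.head_cons, Pi.zero_apply, smul_eq_mul, Complex.coe_algebraMap,
    if_true, Fin.isValue, zero_ne_one, one_ne_zero, if_false, mul_zero, zero_mul,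
    add_zero, zero_add, mul_one] at h0 h1
  have hr0 := congrArg Complex.re h0
  have hi0 := congrArg Complex.im h0
  have hr1 := congrArg Complex.re h1
  have hi1 := congrArg Complex.im h1
  simp only [pow_two, Complex.add_re, Complex.add_im, Complex.mul_re, Complex.mul_im,
    Complex.ofReal_re, Complex.ofReal_im, Complex.zero_re, Complex.zero_im,
    Complex.ofReal_mul] at hr0 hi0 hr1 hi1
  have hsym : H 1 0 = H 0 1 := by
    simpa using hH.1.apply 0 1
  rw [hsym] at hr1 hi1
  set x := z.re with hx
  set y := z.im with hy
  set p := (v 0).re with hp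
  set q := (v 0).im with hq
  set r := (v 1).re with hr
  set s := (v 1).im with hs
  set a : ℝ := k₁*d₂*(p^2+q^2) + k₂*d₁*(r^2+s^2) with ha_def
  set b : ℝ := k₁*l₁*d₂*(p^2+q^2) + k₂*l₂*d₁*(r^2+s^2) with hb_def
  set c : ℝ := d₁*d₂*(H 0 0*k₁^2*(p^2+q^2) + 2*H 0 1*(k₁*k₂)*(p*r+q*s)
      + H 1 1*k₂^2*(r^2+s^2)) with hc_def
  have hre : a*(x^2-y^2) + b*x + c = 0 := by
    rw [ha_def, hb_def, hc_def]
    linear_combination k₁*d₂*p*hr0 + k₁*d₂*q*hi0 + k₂*d₁*r*hr1 + k₂*d₁*s*hi1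
  have him : (2*a*x + b)*y = 0 := by
    rw [ha_def, hb_def]
    linear_combination k₁*d₂*p*hi0 - k₁*d₂*q*hr0 + k₂*d₁*r*hi1 - k₂*d₁*s*hr1
  -- nonvanishing
  have hv01 : 0 < p^2 + q^2 ∨ 0 < r^2 + s^2 := by
    by_contra hcon
    push_neg at hcon
    apply hv
    funext i
    have hp2 : p^2 = 0 := le_antisymm (by linarith only [hcon.1, sq_nonneg q]) (sq_nonneg p)
    have hq2 : q^2 = 0 := le_antisymm (by linarith only [hcon.1, sq_nonneg p]) (sq_nonneg q)
    have hr2 : r^2 = 0 := le_antisymm (by linarith only [hcon.2, sq_nonneg s]) (sq_nonneg r)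
    have hs2 : s^2 = 0 := le_antisymm (by linarith only [hcon.2, sq_nonneg r]) (sq_nonneg s)
    have h1' : p = 0 ∧ q = 0 := ⟨pow_eq_zero_iff two_ne_zero |>.1 hp2, pow_eq_zero_iff two_ne_zero |>.1 hq2⟩
    have h2' : r = 0 ∧ s = 0 := ⟨pow_eq_zero_iff two_ne_zero |>.1 hr2, pow_eq_zero_iff two_ne_zero |>.1 hs2⟩
    fin_cases i
    · exact Complex.ext h1'.1 h1'.2
    · exact Complex.ext h2'.1 h2'.2
  have ha : 0 < a := by
    rw [ha_def]
    rcases hv01 with h | h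
    · linarith only [mul_pos (mul_pos hk₁ hd₂) h,
        mul_nonneg (mul_nonneg hk₂.le hd₁.le) (add_nonneg (sq_nonneg r) (sq_nonneg s))]
    · linarith only [mul_pos (mul_pos hk₂ hd₁) h,
        mul_nonneg (mul_nonneg hk₁.le hd₂.le) (add_nonneg (sq_nonneg p) (sq_nonneg q))]
  have hb : 0 < b := by
    rw [hb_def]
    rcases hv01 with h | h
    · linarith only [mul_pos (mul_pos (mul_pos hk₁ hl₁) hd₂) h,
        mul_nonneg (mul_nonneg (mul_nonneg hk₂.le hl₂.le) hd₁.le)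
          (add_nonneg (sq_nonneg r) (sq_nonneg s))]
    · linarith only [mul_pos (mul_pos (mul_pos hk₂ hl₂) hd₁) h,
        mul_nonneg (mul_nonneg (mul_nonneg hk₁.le hl₁.le) hd₂.le)
          (add_nonneg (sq_nonneg p) (sq_nonneg q))]
  -- quadratic form facts
  have hQnn : ∀ u0 u1 : ℝ, 0 ≤ H 0 0*u0^2 + 2*H 0 1*(u0*u1) + H 1 1*u1^2 := by
    intro u0 u1
    have := hH.posSemidef.dotProduct_mulVec_nonneg ![u0, u1]
    simp only [dotProduct, Matrix.mulVec, Fin.sum_univ_two, Pi.star_apply,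
      Matrix.cons_val_zero, Matrix.cons_val_one, Matrix.head_cons, star_trivial] at this
    rw [hsym] at this
    nlinarith only [this]
  have hQpos : ∀ u0 u1 : ℝ, u0 ≠ 0 ∨ u1 ≠ 0 →
      0 < H 0 0*u0^2 + 2*H 0 1*(u0*u1) + H 1 1*u1^2 := by
    intro u0 u1 hu
    have hune : ![u0, u1] ≠ 0 := by
      intro hzero
      have h0' := congrFun hzero 0
      have h1' := congrFun hzero 1
      simp at h0' h1'
      rcases hu with h | h <;> [exact h h0'; exact h h1']
    have := hH.dotProduct_mulVec_pos hune
    simp only [dotProduct, Matrix.mulVec, Fin.sum_univ_two, Pi.star_apply,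
      Matrix.cons_val_zero, Matrix.cons_val_one, Matrix.head_cons, star_trivial] at this
    rw [hsym] at this
    nlinarith only [this]
  have hc : 0 < c := by
    have hsplit : H 0 0*k₁^2*(p^2+q^2) + 2*H 0 1*(k₁*k₂)*(p*r+q*s) + H 1 1*k₂^2*(r^2+s^2)
        = (H 0 0*(k₁*p)^2 + 2*H 0 1*((k₁*p)*(k₂*r)) + H 1 1*(k₂*r)^2)
        + (H 0 0*(k₁*q)^2 + 2*H 0 1*((k₁*q)*(k₂*s)) + H 1 1*(k₂*s)^2) := by ring
    have hpos : 0 < H 0 0*k₁^2*(p^2+q^2) + 2*H 0 1*(k₁*k₂)*(p*r+q*s) + H 1 1*k₂^2*(r^2+s^2) := by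
      rw [hsplit]
      rcases hv01 with h | h
      · rcases (by
          by_contra hc'
          push_neg at hc'
          rw [hc'.1, hc'.2] at h
          norm_num at h : p ≠ 0 ∨ q ≠ 0) with h' | h'
        · have := hQpos (k₁*p) (k₂*r) (Or.inl (mul_ne_zero hk₁.ne' h'))
          have := hQnn (k₁*q) (k₂*s)
          linarith
        · have := hQpos (k₁*q) (k₂*s) (Or.inl (mul_ne_zero hk₁.ne' h'))
          have := hQnn (k₁*p) (k₂*r)
          linarith
      · rcases (by
          by_contra hc'
          push_neg at hc'
          rw [hc'.1, hc'.2] at h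
          norm_num at h : r ≠ 0 ∨ s ≠ 0) with h' | h'
        · have := hQpos (k₁*p) (k₂*r) (Or.inr (mul_ne_zero hk₂.ne' h'))
          have := hQnn (k₁*q) (k₂*s)
          linarith
        · have := hQpos (k₁*q) (k₂*s) (Or.inr (mul_ne_zero hk₂.ne' h'))
          have := hQnn (k₁*p) (k₂*r)
          linarith
    rw [hc_def]
    positivity
  -- finish
  by_contra hxc
  push_neg at hxc
  rcases eq_or_ne y 0 with hy0 | hy0
  · rw [hy0] at hre
    nlinarith only [hre, hc, mul_nonneg (mul_nonneg ha.le hxc) hxc, mul_nonneg hb.le hxc]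
  · have h2ab : 2*a*x + b = 0 := by
      rcases mul_eq_zero.1 him with h | h
      · exact h
      · exact absurd h hy0
    linarith only [h2ab, hb, mul_nonneg ha.le hxc]
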